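/- Let (ε_k) be strictly increasing with 0 < ε_k < 1/2, and let M = {p_k : k ≥ 0} with metric d(p_k,p_j) = k + j − ε_{max(k,j)} for distinct k,j ≥ 1 and d(p_k,p_0) = k. Then there is no sequence (f_n) of strongly norm-attaining functions in Lip₀(M) with ‖Σ λ_n f_n‖ = max_n |λ_n| for all (λ_n) ∈ c₀; that is, c₀ does not embed isometrically into SNA(M). -/

import Mathlib

/-- The metric of Theorem 4.5: `d(p_k,p_j) = k + j - ε_{max(k,j)}` for distinct
`k, j ≥ 1`, and `d(p_k,p_0) = k`. -/
noncomputable def dProper (ε : ℕ → ℝ) (k j : ℕ) : ℝ :=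
  if k = j then 0
  else if k = 0 then (j : ℝ)
  else if j = 0 then (k : ℝ)
  else (k : ℝ) + (j : ℝ) - ε (max k j)

/-- `L` is the (least) Lipschitz norm of `f` with respect to the distance `dProper ε`. -/
def LipNormEqD (ε : ℕ → ℝ) (f : ℕ → ℝ) (L : ℝ) : Prop :=
  (∀ p q : ℕ, |f p - f q| ≤ L * dProper ε p q) ∧
  ∀ L' : ℝ, 0 ≤ L' → (∀ p q : ℕ, |f p - f q| ≤ L' * dProper ε p q) → L ≤ L'

lemma dProper_comm (ε : ℕ → ℝ) (k j : ℕ) : dProper ε k j = dProper ε j k := by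
  rcases eq_or_ne k j with rfl | h
  · rfl
  · rcases eq_or_ne k 0 with rfl | hk
    · simp [dProper, h, Ne.symm h]
    · rcases eq_or_ne j 0 with rfl | hj
      · simp [dProper, h, Ne.symm h, hk]
      · simp only [dProper, if_neg h, if_neg (Ne.symm h), if_neg hk, if_neg hj,
          max_comm k j]
        ring

lemma dProper_lt (ε : ℕ → ℝ) {k j : ℕ} (hk : k ≠ 0) (h : k < j) :
    dProper ε k j = (k : ℝ) + j - ε j := by
  have hj : j ≠ 0 := by omega
  simp [dProper, h.ne, hk, hj, max_eq_right h.le]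

lemma dProper_zero_lt (ε : ℕ → ℝ) {j : ℕ} (h : j ≠ 0) :
    dProper ε 0 j = (j : ℝ) := by
  simp [dProper, Ne.symm h]

lemma dProper_right_zero (ε : ℕ → ℝ) {k : ℕ} (hk : k ≠ 0) :
    dProper ε k 0 = (k : ℝ) := by
  simp [dProper, hk]

lemma dProper_ne (ε : ℕ → ℝ) {k j : ℕ} (hk : k ≠ 0) (hj : j ≠ 0) (h : k ≠ j) :
    dProper ε k j = (k : ℝ) + j - ε (max k j) := by
  simp [dProper, h, hk, hj]

lemma iSup_abs_eq_one (g : ℕ → ℝ) (hb : ∀ k, |g k| ≤ 1) (k0 : ℕ) (h1 : |g k0| = 1) :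
    (⨆ k, |g k|) = 1 := by
  apply le_antisymm (ciSup_le hb)
  calc (1 : ℝ) = |g k0| := h1.symm
    _ ≤ ⨆ k, |g k| :=
      le_ciSup (f := fun k => |g k|) ⟨1, by rintro x ⟨k, rfl⟩; exact hb k⟩ k0

lemma abs_add_abs_le (a b d : ℝ) (h1 : |a + b| ≤ d) (h2 : |a - b| ≤ d) :
    |a| + |b| ≤ d := by
  rw [abs_le] at h1 h2
  rcases abs_cases a with ⟨ha, _⟩ | ⟨ha, _⟩ <;>
    rcases abs_cases b with ⟨hb, _⟩ | ⟨hb, _⟩ <;>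
    linarith [h1.1, h1.2, h2.1, h2.2]

/-- `c₀` does not embed isometrically into `SNA(M)` for the proper uniformly discrete
space `M` of Theorem 4.5 (base point `p₀ = 0`). -/
theorem stmt13 (ε : ℕ → ℝ) (hmono : StrictMono ε)
    (hpos : ∀ k, 0 < ε k) (hlt : ∀ k, ε k < 1 / 2) :
    ¬∃ f : ℕ → ℕ → ℝ,
      (∀ n, f n 0 = 0) ∧
      -- isometrically equivalent to the canonical basis of c₀
      (∀ lam : ℕ →₀ ℝ,
        LipNormEqD ε (fun z => lam.sum fun n a => a * f n z) (⨆ n, |lam n|)) ∧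
      -- each `f n` (which then has Lipschitz norm 1) strongly attains its norm
      (∀ n, ∃ p q : ℕ, p ≠ q ∧ |f n p - f n q| = dProper ε p q) := by
  rintro ⟨f, hf0, hnorm, hatt⟩
  -- Step 1: each f n is 1-Lipschitz
  have h1 : ∀ n x y, |f n x - f n y| ≤ dProper ε x y := by
    intro n x y
    set lam : ℕ →₀ ℝ := Finsupp.single n 1 with hlam
    have hb : ∀ k, |lam k| ≤ 1 := by
      intro k
      rcases eq_or_ne n k with rfl | hk
      · simp [hlam]
      · simp [hlam, Finsupp.single_eq_of_ne' hk]
    have h1n : |lam n| = 1 := by simp [hlam]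
    have hsup : (⨆ k, |lam k|) = 1 := iSup_abs_eq_one (fun k => lam k) hb n h1n
    have hsum : ∀ z, lam.sum (fun k a => a * f k z) = f n z := by
      intro z
      rw [hlam, Finsupp.sum_single_index (zero_mul (f n z)), one_mul]
    have h := (hnorm lam).1 x y
    rw [hsup] at h
    simpa [hsum x, hsum y] using h
  -- Step 2: pairwise ℓ¹-type inequality
  have h2 : ∀ n m, n ≠ m → ∀ x y,
      |f n x - f n y| + |f m x - f m y| ≤ dProper ε x y := by
    intro n m hnm x y
    have hpair : ∀ s t : ℝ, |s| = 1 → |t| = 1 →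
        |s * (f n x - f n y) + t * (f m x - f m y)| ≤ dProper ε x y := by
      intro s t hs ht
      set lam : ℕ →₀ ℝ := Finsupp.single n s + Finsupp.single m t with hlam
      have happ : ∀ k, lam k = (if n = k then s else 0) + (if m = k then t else 0) := by
        intro k
        simp [hlam, Finsupp.single_apply]
      have hb : ∀ k, |lam k| ≤ 1 := by
        intro k
        rw [happ k]
        rcases eq_or_ne n k with rfl | hk
        · rw [if_pos rfl, if_neg (fun h : m = n => hnm h.symm)]
          simp [hs.le]
        · rw [if_neg hk]
          rcases eq_or_ne m k with rfl | hk'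
          · simp [ht.le]
          · simp [if_neg hk']
      have h1n : |lam n| = 1 := by
        rw [happ n, if_pos rfl, if_neg (fun h : m = n => hnm h.symm)]
        simpa using hs
      have hsup : (⨆ k, |lam k|) = 1 := iSup_abs_eq_one (fun k => lam k) hb n h1n
      have hsum : ∀ z, lam.sum (fun k a => a * f k z) = s * f n z + t * f m z := by
        intro z
        rw [hlam, Finsupp.sum_add_index' (h := fun k a => a * f k z)
            (fun i => zero_mul (f i z)) (fun i a b => add_mul a b (f i z)),
          Finsupp.sum_single_index (zero_mul (f n z)),
          Finsupp.sum_single_index (zero_mul (f m z))]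
      have h := (hnorm lam).1 x y
      rw [hsup] at h
      have h' : |(s * f n x + t * f m x) - (s * f n y + t * f m y)| ≤ dProper ε x y := by
        simpa [hsum x, hsum y] using h
      calc |s * (f n x - f n y) + t * (f m x - f m y)|
          = |(s * f n x + t * f m x) - (s * f n y + t * f m y)| := by ring_nf
        _ ≤ dProper ε x y := h'
    apply abs_add_abs_le _ _ _
    · rw [show (f n x - f n y) + (f m x - f m y)
          = 1 * (f n x - f n y) + 1 * (f m x - f m y) by ring]
      exact hpair 1 1 (by norm_num) (by norm_num)
    · rw [show (f n x - f n y) - (f m x - f m y)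
          = 1 * (f n x - f n y) + (-1) * (f m x - f m y) by ring]
      exact hpair 1 (-1) (by norm_num) (by norm_num)
  -- attaining pairs, ordered
  choose p q hne hval using hatt
  set P : ℕ → ℕ := fun k => min (p k) (q k) with hP
  set Q : ℕ → ℕ := fun k => max (p k) (q k) with hQ
  have hPQ : ∀ k, P k < Q k := by
    intro k
    have := hne k
    simp only [hP, hQ]
    omega
  have hQpos : ∀ k, Q k ≠ 0 := fun k => by have := hPQ k; omega
  have hval' : ∀ k, |f k (P k) - f k (Q k)| = dProper ε (P k) (Q k) := by
    intro k
    rcases le_or_gt (p k) (q k) with h | h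
    · have h1' : P k = p k := min_eq_left h
      have h2' : Q k = q k := max_eq_right h
      rw [h1', h2']
      exact hval k
    · have h1' : P k = q k := min_eq_right h.le
      have h2' : Q k = p k := max_eq_left h.le
      rw [h1', h2', abs_sub_comm, dProper_comm]
      exact hval k
  -- flatness of f m on the attaining pair of f n
  have hflat : ∀ n m, n ≠ m → f m (P n) = f m (Q n) := by
    intro n m hnm
    have h := h2 n m hnm (P n) (Q n)
    rw [hval' n] at h
    have h0 : |f m (P n) - f m (Q n)| ≤ 0 := by linarith
    have := abs_nonneg (f m (P n) - f m (Q n))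
    have : |f m (P n) - f m (Q n)| = 0 := le_antisymm h0 this
    exact sub_eq_zero.mp (abs_eq_zero.mp this)
  -- |f n x| ≤ x
  have habs : ∀ n (x : ℕ), |f n x| ≤ (x : ℝ) := by
    intro n x
    rcases eq_or_ne x 0 with rfl | hx
    · simp [hf0]
    · have h := h1 n x 0
      rw [hf0, sub_zero, dProper_right_zero ε hx] at h
      exact h
  -- the bottoms are pairwise distinct
  have hPne : ∀ n m, n ≠ m → P n ≠ P m := by
    intro n m hnm heq
    rcases eq_or_ne (P n) 0 with hp | hp
    · -- both bottoms are 0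
      have hpm : P m = 0 := heq ▸ hp
      have hfmQn : f m (Q n) = 0 := by
        have h := hflat n m hnm
        rw [hp, hf0] at h
        exact h.symm
      have hfnQm : f n (Q m) = 0 := by
        have h := hflat m n (Ne.symm hnm)
        rw [hpm, hf0] at h
        exact h.symm
      have hQQ : Q n ≠ Q m := by
        intro hq
        have hv := hval' m
        rw [hpm, hf0, ← hq, hfmQn, dProper_zero_lt ε (hQpos n)] at hv
        simp at hv
        exact hQpos n (by exact_mod_cast hv.symm)
      have hfnQn : |f n (Q n)| = (Q n : ℝ) := by
        have hv := hval' n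
        rw [hp, hf0, dProper_zero_lt ε (hQpos n), zero_sub, abs_neg] at hv
        exact hv
      have hfmQm : |f m (Q m)| = (Q m : ℝ) := by
        have hv := hval' m
        rw [hpm, hf0, dProper_zero_lt ε (hQpos m), zero_sub, abs_neg] at hv
        exact hv
      have h := h2 n m hnm (Q n) (Q m)
      rw [hfnQm, sub_zero, hfmQn, zero_sub, abs_neg, hfnQn, hfmQm,
        dProper_ne ε (hQpos n) (hQpos m) hQQ] at h
      linarith [hpos (max (Q n) (Q m))]
    · -- both bottoms equal and positive
      have hpm : P m ≠ 0 := heq ▸ hp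
      have htri : ∀ k : ℕ, |f k (P k) - f k (Q k)| ≤ |f k (P k)| + |f k (Q k)| := by
        intro k
        rw [sub_eq_add_neg]
        exact (abs_add_le _ _).trans (by rw [abs_neg])
      have hbn : (P n : ℝ) - ε (Q n) ≤ |f n (P n)| := by
        have hv := hval' n
        rw [dProper_lt ε hp (hPQ n)] at hv
        have := htri n
        have := habs n (Q n)
        linarith
      have hbm : (P m : ℝ) - ε (Q m) ≤ |f m (P m)| := by
        have hv := hval' m
        rw [dProper_lt ε hpm (hPQ m)] at hv
        have := htri m
        have := habs m (Q m)
        linarith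
      have hsum := h2 n m hnm (P n) 0
      rw [hf0, hf0, sub_zero, sub_zero, dProper_right_zero ε hp] at hsum
      rw [← heq] at hbm
      have hP1 : (1 : ℝ) ≤ (P n : ℝ) := by
        have : 1 ≤ P n := Nat.one_le_iff_ne_zero.mpr hp
        exact_mod_cast this
      have := hlt (Q n)
      have := hlt (Q m)
      linarith
  have hPinj : Function.Injective P := by
    intro a b hab
    by_contra h
    exact hPne a b h hab
  -- pick an index with positive bottom
  obtain ⟨n₀, hn₀⟩ : ∃ n₀, P n₀ ≠ 0 := by
    rcases eq_or_ne (P 0) 0 with h | h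
    · exact ⟨1, fun h' => hPne 0 1 (by norm_num) (h.trans h'.symm)⟩
    · exact ⟨0, h⟩
  -- find a pair entirely to the right of pair n₀
  obtain ⟨m, hsep⟩ : ∃ m, Q n₀ < P m := by
    by_contra hno
    push_neg at hno
    have hmaps : ∀ a ∈ Finset.range (Q n₀ + 2), P a ∈ Finset.range (Q n₀ + 1) :=
      fun a _ => Finset.mem_range.mpr (by have := hno a; omega)
    have hcard := Finset.card_le_card_of_injOn P hmaps hPinj.injOn
    rw [Finset.card_range, Finset.card_range] at hcard
    omega
  have hmn : n₀ ≠ m := by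
    intro h
    rw [h] at hsep
    exact absurd hsep (by have := hPQ m; omega)
  -- final four-point contradiction
  have hu : f n₀ (P m) = f n₀ (Q m) := hflat m n₀ (Ne.symm hmn)
  have hv2 : f m (P n₀) = f m (Q n₀) := hflat n₀ m hmn
  have hPm : P m ≠ 0 := by omega
  have hI1 := h2 n₀ m hmn (Q n₀) (P m)
  rw [dProper_lt ε (hQpos n₀) hsep] at hI1
  have hlt2 : P n₀ < Q m := by have := hPQ n₀; have := hPQ m; omega
  have hI2 := h2 n₀ m hmn (P n₀) (Q m)
  rw [dProper_lt ε hn₀ hlt2] at hI2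
  have hE1 := hval' n₀
  rw [dProper_lt ε hn₀ (hPQ n₀)] at hE1
  have hE2 := hval' m
  rw [dProper_lt ε hPm (hPQ m)] at hE2
  have t1 : |f n₀ (P n₀) - f n₀ (Q n₀)|
      ≤ |f n₀ (P n₀) - f n₀ (Q m)| + |f n₀ (Q n₀) - f n₀ (P m)| := by
    have := abs_sub_le (f n₀ (P n₀)) (f n₀ (Q m)) (f n₀ (Q n₀))
    have heq2 : |f n₀ (Q m) - f n₀ (Q n₀)| = |f n₀ (Q n₀) - f n₀ (P m)| := by
      rw [← hu, abs_sub_comm]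
    linarith [heq2 ▸ this]
  have t2 : |f m (P m) - f m (Q m)|
      ≤ |f m (Q n₀) - f m (P m)| + |f m (P n₀) - f m (Q m)| := by
    have := abs_sub_le (f m (P m)) (f m (Q n₀)) (f m (Q m))
    have heq2 : |f m (P m) - f m (Q n₀)| = |f m (Q n₀) - f m (P m)| := abs_sub_comm _ _
    have heq3 : |f m (Q n₀) - f m (Q m)| = |f m (P n₀) - f m (Q m)| := by rw [← hv2]
    linarith [heq2 ▸ heq3 ▸ this]
  have hmonolt : ε (Q n₀) < ε (P m) := hmono hsep
  linarith
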